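/- Fix a half-integer l ≥ 0 and integers/half-integers k, J, N with the coupling constraints of angular momenta. Define f_k^{(l)} := (1/((2k+1)(2l+1))) · Σ_{j=|k−l|}^{min(NJ, k+l)} (2j+1). Then: (a) f_k^{(l)} ≤ 1 for all k, l; (b) if NJ ≥ k + l then f_k^{(l)} = 1; (c) if l > NJ and k > l then f_k^{(l)} ≤ 1/2; (d) if l ≤ NJ and k > NJ then f_k^{(l)} ≤ 1/2. -/

import Mathlib

/-- `truncFrac K L S` is the quantity `f_k^{(l)}` of the paper, written in
doubled-spin variables `K = 2k`, `L = 2l`, `S = 2NJ`: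
`f = (∑_{j=|k−l|}^{min(NJ, k+l)} (2j+1)) / ((2k+1)(2l+1))`, where the sum runs
over `j` in integer steps (doubled variable `j` with parity `≡ K+L (mod 2)`)
and `2j+1` is the dimension of the spin-`j` irrep. -/
noncomputable def truncFrac (K L S : ℕ) : ℝ :=
  (∑ j ∈ (Finset.Icc (max K L - min K L) (min S (K + L))).filter
      (fun j => j % 2 = (K + L) % 2), ((j : ℝ) + 1)) /
    (((K : ℝ) + 1) * ((L : ℝ) + 1))

lemma range_sum_aux (a n : ℕ) :
    ∑ i ∈ Finset.range n, ((a : ℝ) + 2 * i + 1) = n * (a + n) := by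
  induction n with
  | zero => simp
  | succ n ih => rw [Finset.sum_range_succ, ih]; push_cast; ring

lemma filt_eq_aux (a c : ℕ) :
    (Finset.Icc a c).filter (fun j => j % 2 = a % 2) =
      (Finset.range ((c + 2 - a) / 2)).image (fun i => a + 2 * i) := by
  ext j
  simp only [Finset.mem_filter, Finset.mem_Icc, Finset.mem_image, Finset.mem_range]
  constructor
  · rintro ⟨⟨h1, h2⟩, h3⟩
    exact ⟨(j - a) / 2, by omega, by omega⟩
  · rintro ⟨i, hi, rfl⟩
    omega

lemma sum_parity_aux (a c : ℕ) :
    (∑ j ∈ (Finset.Icc a c).filter (fun j => j % 2 = a % 2), ((j : ℝ) + 1)) =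
      (((c + 2 - a) / 2 : ℕ) : ℝ) * ((a : ℝ) + (((c + 2 - a) / 2 : ℕ) : ℝ)) := by
  rw [filt_eq_aux, Finset.sum_image (by intro x _ y _ h; simp only at h; omega)]
  rw [← range_sum_aux a ((c + 2 - a) / 2)]
  apply Finset.sum_congr rfl
  intros
  push_cast
  ring

/-- Properties of the truncated dimension fraction `f_k^{(l)}` (in doubled-spin
variables `K = 2k`, `L = 2l`, `S = 2NJ`):
(a) `f ≤ 1` always; (b) if `NJ ≥ k+l` then `f = 1`;
(c) if `l > NJ` and `k > l` then `f ≤ 1/2`;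
(d) if `l ≤ NJ` and `k > NJ` then `f ≤ 1/2`. -/
theorem truncFrac_bounds (K L S : ℕ) :
    truncFrac K L S ≤ 1
    ∧ (K + L ≤ S → truncFrac K L S = 1)
    ∧ (S < L → L < K → truncFrac K L S ≤ 1 / 2)
    ∧ (L ≤ S → S < K → truncFrac K L S ≤ 1 / 2) := by
  have hpar : (K + L) % 2 = (max K L - min K L) % 2 := by omega
  have hunf : truncFrac K L S =
      ((((min S (K + L) + 2 - (max K L - min K L)) / 2 : ℕ) : ℝ) *
        (((max K L - min K L : ℕ) : ℝ) +
          (((min S (K + L) + 2 - (max K L - min K L)) / 2 : ℕ) : ℝ))) /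
      (((K : ℝ) + 1) * ((L : ℝ) + 1)) := by
    unfold truncFrac
    rw [hpar, sum_parity_aux]
  set a := max K L - min K L with ha
  set n := (min S (K + L) + 2 - a) / 2 with hn
  have hden : (0 : ℝ) < ((K : ℝ) + 1) * ((L : ℝ) + 1) := by positivity
  have hminmax : (min K L + 1) * (max K L + 1) = (K + 1) * (L + 1) := by
    rcases Nat.le_total K L with h | h
    · rw [min_eq_left h, max_eq_right h, Nat.mul_comm]
    · rw [min_eq_right h, max_eq_left h, Nat.mul_comm]
  refine ⟨?_, ?_, ?_, ?_⟩
  · -- (a)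
    rw [hunf, div_le_one hden]
    have hnat : n * (a + n) ≤ (K + 1) * (L + 1) := by
      calc n * (a + n) ≤ (min K L + 1) * (max K L + 1) :=
            Nat.mul_le_mul (by omega) (by omega)
        _ = (K + 1) * (L + 1) := hminmax
    calc ((n : ℝ)) * ((a : ℝ) + n) = ((n * (a + n) : ℕ) : ℝ) := by push_cast; ring
      _ ≤ (((K + 1) * (L + 1) : ℕ) : ℝ) := by exact_mod_cast hnat
      _ = ((K : ℝ) + 1) * ((L : ℝ) + 1) := by push_cast; ring
  · -- (b)
    intro hS
    rw [hunf]
    have hnat : n * (a + n) = (K + 1) * (L + 1) := by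
      have h1 : n = min K L + 1 := by omega
      have h2 : a + n = max K L + 1 := by omega
      rw [h2, h1, hminmax]
    have : ((n : ℝ)) * ((a : ℝ) + n) = ((K : ℝ) + 1) * ((L : ℝ) + 1) := by
      calc ((n : ℝ)) * ((a : ℝ) + n) = ((n * (a + n) : ℕ) : ℝ) := by push_cast; ring
        _ = (((K + 1) * (L + 1) : ℕ) : ℝ) := by exact_mod_cast hnat
        _ = ((K : ℝ) + 1) * ((L : ℝ) + 1) := by push_cast; ring
    rw [this, div_self (ne_of_gt hden)]
  · -- (c)
    intro hSL hLK
    rw [hunf]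
    rcases Nat.eq_zero_or_pos n with h0 | hpos
    · rw [h0]; simp
    · rw [div_le_iff₀ hden]
      have hKa : (K : ℝ) = (a : ℝ) + L := by
        have : K = a + L := by omega
        exact_mod_cast this
      have h2 : (a : ℝ) + 2 * n ≤ (L : ℝ) + 1 := by
        have : a + 2 * n ≤ L + 1 := by omega
        exact_mod_cast this
      have hA : (0 : ℝ) ≤ (a : ℝ) := Nat.cast_nonneg a
      have hN : (0 : ℝ) ≤ (n : ℝ) := Nat.cast_nonneg n
      have hL : (0 : ℝ) ≤ (L : ℝ) := Nat.cast_nonneg L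
      nlinarith [sq_nonneg ((L : ℝ) + 1 - (a : ℝ) - 2 * n), sq_nonneg ((a : ℝ)),
        mul_nonneg hA (by linarith : (0:ℝ) ≤ (L:ℝ) + 1)]
  · -- (d)
    intro hLS hSK
    rw [hunf]
    rcases Nat.eq_zero_or_pos n with h0 | hpos
    · rw [h0]; simp
    · rw [div_le_iff₀ hden]
      have hKa : (K : ℝ) = (a : ℝ) + L := by
        have : K = a + L := by omega
        exact_mod_cast this
      have h2 : (a : ℝ) + 2 * n ≤ (K : ℝ) + 1 := by
        have : a + 2 * n ≤ K + 1 := by omega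
        exact_mod_cast this
      have hA : (0 : ℝ) ≤ (a : ℝ) := Nat.cast_nonneg a
      have hN : (0 : ℝ) ≤ (n : ℝ) := Nat.cast_nonneg n
      have hL : (0 : ℝ) ≤ (L : ℝ) := Nat.cast_nonneg L
      nlinarith [sq_nonneg ((K : ℝ) + 1 - (a : ℝ) - 2 * n), sq_nonneg ((a : ℝ)),
        mul_nonneg hA (by linarith : (0:ℝ) ≤ (L:ℝ) + 1)]
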